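/- Let u = (a_1,...,a_n) and w = (b_1,...,b_s) be finite sequences of positive integers, let v be a block of k positive integers, and let 0 < ε < 1. If D_{v,n}(u) < ε and s/n < ε, then: (a) for every ℓ with 1 ≤ ℓ ≤ s, the concatenation uw truncated at length n+ℓ satisfies D_{v,n+ℓ}(uw) < 2ε; and (b) the concatenation wu satisfies D_{v,n+s}(wu) < 2ε. -/

import Mathlib

open MeasureTheory

/-- The continuant of a finite list of partial quotients: for `[a₁,...,aₙ]` it equals `qₙ`,
where `q₋₁ = 0`, `q₀ = 1`, `qₙ = aₙ qₙ₋₁ + qₙ₋₂`. -/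
def contK : List ℕ → ℕ
  | [] => 1
  | [a] => a
  | a :: b :: l => a * contK (b :: l) + contK l

/-- The value of the finite continued fraction `[a₁,...,aₙ] = 1/(a₁ + 1/(a₂ + ⋯ + 1/aₙ))`. -/
noncomputable def cfVal : List ℕ → ℝ
  | [] => 0
  | a :: l => 1 / (a + cfVal l)

/-- The list with its last entry incremented by one. -/
def succLast : List ℕ → List ℕ
  | [] => []
  | [a] => [a + 1]
  | a :: b :: l => a :: succLast (b :: l)

/-- The cf-ary interval `I_{[a₁,...,aₙ]}`: the open interval with endpoints
`[a₁,...,aₙ]` and `[a₁,...,aₙ+1]`, i.e. the set of numbers whose continued fraction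
expansion begins with `a₁,...,aₙ`. -/
noncomputable def cfInterval (u : List ℕ) : Set ℝ :=
  Set.Ioo (min (cfVal u) (cfVal (succLast u))) (max (cfVal u) (cfVal (succLast u)))

/-- The Gauss measure of a set: `μ(A) = (1/log 2) ∫_A dx/(1+x)`. -/
noncomputable def gaussM (A : Set ℝ) : ℝ := (1 / Real.log 2) * ∫ x in A, 1 / (1 + x)

/-- `|x|_v`: the number of occurrences of the block `v` as a consecutive subblock of `x`,
i.e. the number of indices `j` with `0 ≤ j ≤ |x| - |v|` such that `v` occurs in `x` at
position `j`. -/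
def occCount (x v : List ℕ) : ℕ :=
  ((Finset.range (x.length + 1 - v.length)).filter
    (fun j => (x.drop j).take v.length = v)).card

/-- The cf-discrepancy of the finite sequence `x` with respect to the block `v`:
`D_{v,|x|}(x) = | |x|_v/|x| - μ(I_v) |`. -/
noncomputable def cfDisc (v x : List ℕ) : ℝ :=
  |(occCount x v : ℝ) / (x.length : ℝ) - gaussM (cfInterval v)|



private lemma dropTakeAppend (x t : List ℕ) (j k : ℕ) (h : j + k ≤ x.length) :
    (((x ++ t).drop j).take k) = ((x.drop j).take k) := by
  rw [List.drop_append_of_le_length (by omega),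
    List.take_append_of_le_length (by simp [List.length_drop]; omega)]

private lemma occ_right_le (x t v : List ℕ) : occCount x v ≤ occCount (x ++ t) v := by
  unfold occCount
  apply Finset.card_le_card
  intro j hj
  simp only [Finset.mem_filter, Finset.mem_range, List.length_append] at *
  obtain ⟨hj1, hj2⟩ := hj
  refine ⟨by omega, ?_⟩
  rw [dropTakeAppend x t j v.length (by omega)]
  exact hj2

private lemma occ_append_le (x t v : List ℕ) :
    occCount (x ++ t) v ≤ occCount x v + t.length := by
  unfold occCount
  have hsub : (Finset.range ((x ++ t).length + 1 - v.length)).filter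
        (fun j => (((x ++ t).drop j).take v.length = v))
      ⊆ ((Finset.range (x.length + 1 - v.length)).filter
        (fun j => ((x.drop j).take v.length = v)))
      ∪ Finset.Ico (x.length + 1 - v.length) ((x ++ t).length + 1 - v.length) := by
    intro j hj
    simp only [Finset.mem_filter, Finset.mem_range, Finset.mem_union, Finset.mem_Ico,
      List.length_append] at *
    obtain ⟨hj1, hj2⟩ := hj
    by_cases h : j < x.length + 1 - v.length
    · left
      refine ⟨h, ?_⟩
      rw [← dropTakeAppend x t j v.length (by omega)]
      exact hj2
    · right; omega
  calc _ ≤ _ := Finset.card_le_card hsub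
    _ ≤ _ + (Finset.Ico (x.length + 1 - v.length) ((x ++ t).length + 1 - v.length)).card :=
        Finset.card_union_le _ _
    _ ≤ _ + t.length := by
        apply Nat.add_le_add_left
        rw [Nat.card_Ico]
        simp only [List.length_append]
        omega

private lemma occ_left_le (t x v : List ℕ) : occCount x v ≤ occCount (t ++ x) v := by
  unfold occCount
  rw [← Finset.card_image_of_injective _ (add_right_injective t.length)]
  apply Finset.card_le_card
  intro j hj
  simp only [Finset.mem_image, Finset.mem_filter, Finset.mem_range, List.length_append] at *
  obtain ⟨i, ⟨hi1, hi2⟩, rfl⟩ := hj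
  refine ⟨by omega, ?_⟩
  rw [List.drop_length_add_append]
  exact hi2

private lemma occ_append_left_le (t x v : List ℕ) :
    occCount (t ++ x) v ≤ occCount x v + t.length := by
  unfold occCount
  have hsub : (Finset.range ((t ++ x).length + 1 - v.length)).filter
        (fun j => (((t ++ x).drop j).take v.length = v))
      ⊆ (((Finset.range (x.length + 1 - v.length)).filter
        (fun j => ((x.drop j).take v.length = v))).image (t.length + ·))
      ∪ Finset.range t.length := by
    intro j hj
    simp only [Finset.mem_filter, Finset.mem_range, Finset.mem_union, Finset.mem_image,
      List.length_append] at *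
    obtain ⟨hj1, hj2⟩ := hj
    by_cases h : j < t.length
    · right; omega
    · left
      refine ⟨j - t.length, ⟨by omega, ?_⟩, by omega⟩
      rw [show j = t.length + (j - t.length) by omega, List.drop_length_add_append] at hj2
      exact hj2
  calc _ ≤ _ := Finset.card_le_card hsub
    _ ≤ _ + (Finset.range t.length).card := Finset.card_union_le _ _
    _ ≤ _ + t.length := by
        rw [Finset.card_range]
        apply Nat.add_le_add_right
        rw [Finset.card_image_of_injective _ (add_right_injective t.length)]

private lemma occ_le_len (x v : List ℕ) (hv : v ≠ []) : occCount x v ≤ x.length := by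
  have h1 : occCount x v ≤ x.length + 1 - v.length :=
    (Finset.card_filter_le _ _).trans_eq (Finset.card_range _)
  have h2 : 1 ≤ v.length := List.length_pos_iff.mpr hv
  omega

private lemma arith {ε g : ℝ} {n d ou ox : ℕ} (hn : 0 < n) (hle : ou ≤ ox)
    (hub : ox ≤ ou + d) (houn : ou ≤ n) (hd : (d : ℝ) / n < ε)
    (h1 : |(ou : ℝ) / n - g| < ε) :
    |(ox : ℝ) / ((n : ℝ) + d) - g| < 2 * ε := by
  have hN : (0 : ℝ) < n := by exact_mod_cast hn
  have hND : (0 : ℝ) < (n : ℝ) + d := by positivity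
  have h1' : (ou : ℝ) ≤ ox := by exact_mod_cast hle
  have h2' : (ox : ℝ) ≤ (ou : ℝ) + d := by exact_mod_cast hub
  have h3' : (ou : ℝ) ≤ n := by exact_mod_cast houn
  have hd0 : (0 : ℝ) ≤ d := by positivity
  have e1 : (ox : ℝ) / ((n : ℝ) + d) ≤ (ou : ℝ) / n + (d : ℝ) / n := by
    rw [← add_div, div_le_div_iff₀ hND hN]
    nlinarith
  have e2 : (ou : ℝ) / n - (d : ℝ) / n ≤ (ox : ℝ) / ((n : ℝ) + d) := by
    rw [← sub_div, div_le_div_iff₀ hN hND]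
    nlinarith
  have key : |(ox : ℝ) / ((n : ℝ) + d) - (ou : ℝ) / n| ≤ (d : ℝ) / n := by
    rw [abs_le]; constructor <;> linarith
  calc |(ox : ℝ) / ((n : ℝ) + d) - g|
      ≤ |(ox : ℝ) / ((n : ℝ) + d) - (ou : ℝ) / n| + |(ou : ℝ) / n - g| := abs_sub_le _ _ _
    _ < 2 * ε := by linarith

theorem cfDisc_append_small (u w v : List ℕ) (ε : ℝ)
    (hu : ∀ x ∈ u, 0 < x) (hw : ∀ x ∈ w, 0 < x) (hv : ∀ x ∈ v, 0 < x)
    (hun : u ≠ []) (hwn : w ≠ []) (hvn : v ≠ [])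
    (hε0 : 0 < ε) (hε1 : ε < 1)
    (h1 : cfDisc v u < ε)
    (h2 : (w.length : ℝ) / (u.length : ℝ) < ε) :
    (∀ ℓ : ℕ, 1 ≤ ℓ → ℓ ≤ w.length →
        cfDisc v ((u ++ w).take (u.length + ℓ)) < 2 * ε) ∧
      cfDisc v (w ++ u) < 2 * ε := by
  have hn : 0 < u.length := List.length_pos_iff.mpr hun
  have hN : (0 : ℝ) < u.length := by exact_mod_cast hn
  have houn : occCount u v ≤ u.length := occ_le_len u v hvn
  unfold cfDisc at h1 ⊢
  constructor
  · intro ℓ hℓ1 hℓ2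
    have hx : (u ++ w).take (u.length + ℓ) = u ++ w.take ℓ := List.take_length_add_append ℓ
    rw [hx]
    have hlen : (u ++ w.take ℓ).length = u.length + ℓ := by
      simp [List.length_append, List.length_take, min_eq_left hℓ2]
    rw [hlen]
    have hd : (ℓ : ℝ) / u.length < ε := by
      have : (ℓ : ℝ) / u.length ≤ (w.length : ℝ) / u.length := by
        gcongr <;> exact_mod_cast hℓ2
      linarith
    have := arith (g := gaussM (cfInterval v)) hn (occ_right_le u (w.take ℓ) v)
      ((occ_append_le u (w.take ℓ) v).trans (by rw [List.length_take, min_eq_left hℓ2]))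
      houn hd h1
    convert this using 3
    push_cast
    ring
  · have hlen : (w ++ u).length = u.length + w.length := by
      simp [List.length_append, Nat.add_comm]
    rw [hlen]
    have := arith (g := gaussM (cfInterval v)) hn (occ_left_le w u v)
      (occ_append_left_le w u v) houn h2 h1
    convert this using 3
    push_cast
    ring
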